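/- If v is a λ-eigenvector of the Laplacian L₁ of G, then Bv is a λ-eigenvector of the Laplacian L_k of F_k(G), where B is the (n,k)-binomial matrix. -/

import Mathlib

open Finset

/-- The `k`-token graph of `G`: vertices are the `k`-subsets of `V`, two being adjacent
iff their symmetric difference is a pair `{a,b}` with `a ∈ A`, `b ∈ B`, `G.Adj a b`. -/
def tokenGraph {V : Type*} [DecidableEq V] (G : SimpleGraph V) (k : ℕ) :
    SimpleGraph {s : Finset V // s.card = k} where
  Adj A B := ∃ a b, a ∈ A.1 ∧ b ∈ B.1 ∧ G.Adj a b ∧ symmDiff A.1 B.1 = {a, b}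
  symm := by
    constructor
    rintro A B ⟨a, b, ha, hb, hab, hd⟩
    exact ⟨b, a, hb, ha, hab.symm, by rw [symmDiff_comm, hd, Finset.pair_comm]⟩
  loopless := by
    constructor
    rintro A ⟨a, b, ha, hb, hab, hd⟩
    rw [symmDiff_self] at hd
    exact (Finset.insert_ne_empty a {b}) hd.symm

noncomputable instance tokenGraph.instDecidableRelAdj {V : Type*} [DecidableEq V]
    (G : SimpleGraph V) (k : ℕ) : DecidableRel (tokenGraph G k).Adj :=
  Classical.decRel _

/-- The `(n,k)`-binomial matrix: rows are characteristic vectors of the `k`-subsets. -/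
def binMatrix (V : Type*) [DecidableEq V] (k : ℕ) :
    Matrix {s : Finset V // s.card = k} V ℝ :=
  fun A j => if j ∈ A.1 then 1 else 0

set_option linter.unusedSectionVars false

section Aux
variable {V : Type*} [Fintype V] [DecidableEq V]

lemma lap_mulVec_apply' (G : SimpleGraph V) [DecidableRel G.Adj] (v : V → ℝ) (x : V) :
    (G.lapMatrix ℝ).mulVec v x = ∑ y ∈ G.neighborFinset x, (v x - v y) := by
  rw [SimpleGraph.lapMatrix, Matrix.sub_mulVec]
  simp only [Pi.sub_apply, Matrix.mulVec_diagonal, SimpleGraph.adjMatrix_mulVec_apply,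
    SimpleGraph.degMatrix]
  rw [Finset.sum_sub_distrib, Finset.sum_const, SimpleGraph.card_neighborFinset_eq_degree]
  ring

lemma bin_mulVec_apply (k : ℕ) (v : V → ℝ) (A : {s : Finset V // s.card = k}) :
    (binMatrix V k).mulVec v A = ∑ j ∈ A.1, v j := by
  simp [binMatrix, Matrix.mulVec, dotProduct, ite_mul, Finset.sum_ite_mem]

variable (G : SimpleGraph V) [DecidableRel G.Adj] {k : ℕ}

lemma insert_erase_card (A : {s : Finset V // s.card = k}) (hk1 : 1 ≤ k) {a b : V}
    (ha : a ∈ A.1) (hb : b ∉ A.1) : (insert b (A.1.erase a)).card = k := by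
  rw [Finset.card_insert_of_notMem (fun h => hb (Finset.mem_of_mem_erase h)),
    Finset.card_erase_of_mem ha, A.2]
  omega

lemma symmDiff_insert_erase (A : Finset V) {a b : V} (ha : a ∈ A) (hb : b ∉ A) :
    symmDiff A (insert b (A.erase a)) = {a, b} := by
  have hab : a ≠ b := fun h => hb (h ▸ ha)
  ext x
  simp only [Finset.mem_symmDiff, Finset.mem_insert, Finset.mem_erase, Finset.mem_singleton]
  constructor
  · rintro (⟨hx, h⟩ | ⟨h, hx⟩)
    · push_neg at h
      exact Or.inl (by tauto)
    · rcases h with h | ⟨_, h⟩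
      · exact Or.inr h
      · exact absurd h hx
  · rintro (rfl | rfl)
    · exact Or.inl ⟨ha, by tauto⟩
    · exact Or.inr ⟨Or.inl rfl, hb⟩

/-- The neighbours of `A` in the token graph are exactly `insert b (A.erase a)`
for `a ∈ A`, `b ∉ A`, `G.Adj a b`. -/
lemma token_neighbor_sum (hk1 : 1 ≤ k) (v : V → ℝ) (A : {s : Finset V // s.card = k}) :
    ∑ C ∈ (tokenGraph G k).neighborFinset A,
        ((∑ j ∈ A.1, v j) - ∑ j ∈ C.1, v j) =
      ∑ p ∈ (A.1 ×ˢ A.1ᶜ).filter (fun p => G.Adj p.1 p.2), (v p.1 - v p.2) := by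
  refine (Finset.sum_bij
    (i := fun p hp => (⟨insert p.2 (A.1.erase p.1),
      insert_erase_card A hk1 (by simp at hp; tauto) (by simp at hp; tauto)⟩ :
      {s : Finset V // s.card = k}))
    ?_ ?_ ?_ ?_).symm
  · -- maps into neighbours
    rintro ⟨a, b⟩ hp
    simp only [Finset.mem_filter, Finset.mem_product, Finset.mem_compl] at hp
    obtain ⟨⟨ha, hb⟩, hadj⟩ := hp
    rw [SimpleGraph.mem_neighborFinset]
    exact ⟨a, b, ha, Finset.mem_insert_self _ _, hadj,
      symmDiff_insert_erase A.1 ha hb⟩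
  · -- injective
    rintro ⟨a, b⟩ hp ⟨a', b'⟩ hp' h
    simp only [Finset.mem_filter, Finset.mem_product, Finset.mem_compl] at hp hp'
    obtain ⟨⟨ha, hb⟩, _⟩ := hp
    obtain ⟨⟨ha', hb'⟩, _⟩ := hp'
    have hEq : insert b (A.1.erase a) = insert b' (A.1.erase a') := congrArg Subtype.val h
    have hbb : b = b' := by
      have : b ∈ insert b' (A.1.erase a') := hEq ▸ Finset.mem_insert_self b _
      rcases Finset.mem_insert.1 this with h | h
      · exact h
      · exact absurd (Finset.mem_of_mem_erase h) hb
    have haa : a = a' := by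
      have hna : a ∉ insert b (A.1.erase a) := by
        simp only [Finset.mem_insert, Finset.mem_erase]
        push_neg
        exact ⟨fun h => hb (h ▸ ha), fun h => absurd rfl h⟩
      rw [hEq] at hna
      simp only [Finset.mem_insert, Finset.mem_erase] at hna
      push_neg at hna
      by_contra hne
      exact absurd ha (hna.2 hne)
    simp [haa, hbb]
  · -- surjective
    intro C hC
    rw [SimpleGraph.mem_neighborFinset] at hC
    obtain ⟨a, b, ha, hb, hadj, hd⟩ := hC
    have haC : a ∉ C.1 := by
      intro haC
      have : a ∉ symmDiff A.1 C.1 := by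
        simp [Finset.mem_symmDiff, ha, haC]
      rw [hd] at this; simp at this
    have hbA : b ∉ A.1 := by
      intro hbA
      have : b ∉ symmDiff A.1 C.1 := by
        simp [Finset.mem_symmDiff, hb, hbA]
      rw [hd] at this; simp at this
    have hCeq : C.1 = insert b (A.1.erase a) := by
      ext x
      simp only [Finset.mem_insert, Finset.mem_erase]
      constructor
      · intro hx
        by_cases hxA : x ∈ A.1
        · refine Or.inr ⟨fun h => haC (h ▸ hx), hxA⟩
        · have : x ∈ symmDiff A.1 C.1 := by
            simp [Finset.mem_symmDiff, hx, hxA]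
          rw [hd] at this
          rcases Finset.mem_insert.1 this with h | h
          · exact absurd (h ▸ hx) haC
          · exact Or.inl (Finset.mem_singleton.1 h)
      · rintro (rfl | ⟨hxa, hxA⟩)
        · exact hb
        · by_contra hxC
          have : x ∈ symmDiff A.1 C.1 := by
            simp [Finset.mem_symmDiff, hxA, hxC]
          rw [hd] at this
          rcases Finset.mem_insert.1 this with h | h
          · exact hxa h
          · exact hbA ((Finset.mem_singleton.1 h) ▸ hxA)
    refine ⟨(a, b), ?_, ?_⟩
    · simp [Finset.mem_filter, Finset.mem_product, ha, hbA, hadj]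
    · exact Subtype.ext hCeq.symm
  · -- values
    rintro ⟨a, b⟩ hp
    simp only [Finset.mem_filter, Finset.mem_product, Finset.mem_compl] at hp
    obtain ⟨⟨ha, hb⟩, _⟩ := hp
    have hbe : b ∉ A.1.erase a := fun h => hb (Finset.mem_of_mem_erase h)
    rw [Finset.sum_insert hbe, Finset.sum_erase_eq_sub ha]
    ring

lemma lap_sum_over (v : V → ℝ) (A : {s : Finset V // s.card = k}) :
    ∑ a ∈ A.1, (G.lapMatrix ℝ).mulVec v a =
      ∑ p ∈ (A.1 ×ˢ A.1ᶜ).filter (fun p => G.Adj p.1 p.2), (v p.1 - v p.2) := by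
  have h1 : ∀ a, (G.lapMatrix ℝ).mulVec v a =
      (∑ y ∈ A.1, if G.Adj a y then v a - v y else 0) +
      (∑ y ∈ A.1ᶜ, if G.Adj a y then v a - v y else 0) := by
    intro a
    rw [lap_mulVec_apply', ← Finset.sum_filter, ← Finset.sum_filter]
    rw [← Finset.sum_union]
    · congr 1
      ext y
      simp [SimpleGraph.mem_neighborFinset, Finset.mem_filter, Finset.mem_compl]
      tauto
    · exact Finset.disjoint_filter_filter disjoint_compl_right
  simp_rw [h1, Finset.sum_add_distrib]
  have hzero : ∑ a ∈ A.1, ∑ y ∈ A.1, (if G.Adj a y then v a - v y else 0) = 0 := by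
    rw [← Finset.sum_product']
    refine Finset.sum_involution (fun p _ => (p.2, p.1)) ?_ ?_ ?_ ?_
    · intro p _
      by_cases h : G.Adj p.1 p.2
      · simp only [h, if_true, h.symm]; ring
      · have h' : ¬ G.Adj p.2 p.1 := fun hh => h hh.symm
        simp [h, h']
    · intro p _ hf hpp
      apply hf
      have : p.1 = p.2 := by
        have := congrArg Prod.fst hpp
        simpa using this.symm
      simp [this, G.irrefl]
    · intro p hp
      simp only [Finset.mem_product] at hp ⊢
      exact ⟨hp.2, hp.1⟩
    · intro p _
      rfl
  rw [hzero, zero_add, ← Finset.sum_product', Finset.sum_filter]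

end Aux

theorem binMatrix_mulVec_eigenvector {V : Type*} [Fintype V] [DecidableEq V]
    (G : SimpleGraph V) [DecidableRel G.Adj] (k : ℕ) (hk1 : 1 ≤ k)
    (hk : k ≤ Fintype.card V - 1) (lam : ℝ) (v : V → ℝ) (hv : v ≠ 0)
    (heig : (G.lapMatrix ℝ).mulVec v = lam • v) :
    (binMatrix V k).mulVec v ≠ 0 ∧
      ((tokenGraph G k).lapMatrix ℝ).mulVec ((binMatrix V k).mulVec v) =
        lam • (binMatrix V k).mulVec v := by
  have hn : 2 ≤ Fintype.card V := by
    by_contra h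
    push_neg at h
    interval_cases h' : Fintype.card V <;> omega
  constructor
  · -- Bv ≠ 0
    intro hB
    have hsum : ∀ A : {s : Finset V // s.card = k}, ∑ j ∈ A.1, v j = 0 := by
      intro A
      have := congrFun hB A
      rwa [bin_mulVec_apply] at this
    -- v is constant
    have hconst : ∀ a b : V, v a = v b := by
      intro a b
      by_cases hab : a = b
      · rw [hab]
      have hcard : k - 1 ≤ (Finset.univ \ ({a, b} : Finset V)).card := by
        rw [Finset.card_sdiff_of_subset (Finset.subset_univ _), Finset.card_univ,
          Finset.card_pair hab]
        omega
      obtain ⟨S, hS, hScard⟩ := Finset.exists_subset_card_eq hcard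
      have haS : a ∉ S := fun h => by have := hS h; simp at this
      have hbS : b ∉ S := fun h => by have := hS h; simp at this
      have hA : (insert a S).card = k := by
        rw [Finset.card_insert_of_notMem haS, hScard]; omega
      have hB' : (insert b S).card = k := by
        rw [Finset.card_insert_of_notMem hbS, hScard]; omega
      have h1 := hsum ⟨insert a S, hA⟩
      have h2 := hsum ⟨insert b S, hB'⟩
      rw [Finset.sum_insert haS] at h1
      rw [Finset.sum_insert hbS] at h2
      linarith
    -- hence v = 0
    obtain ⟨x, hx⟩ := Function.ne_iff.1 hv
    have hkcard : k ≤ (Finset.univ : Finset V).card := by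
      rw [Finset.card_univ]; omega
    obtain ⟨S, _, hScard⟩ := Finset.exists_subset_card_eq hkcard
    have hSne : S.Nonempty := Finset.card_pos.1 (by omega)
    obtain ⟨y, hy⟩ := hSne
    have : ∑ j ∈ S, v j = 0 := hsum ⟨S, hScard⟩
    have hvy : ∀ j ∈ S, v j = v y := fun j _ => hconst j y
    rw [Finset.sum_congr rfl hvy, Finset.sum_const, hScard] at this
    have hvy0 : v y = 0 := by
      have hk0 : (k : ℝ) ≠ 0 := Nat.cast_ne_zero.2 (by omega)
      rw [nsmul_eq_mul] at this
      rcases mul_eq_zero.1 this with h | h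
      · exact absurd h hk0
      · exact h
    exact hx (by simp [hconst x y, hvy0])
  · -- eigen equation
    have key : ((tokenGraph G k).lapMatrix ℝ).mulVec ((binMatrix V k).mulVec v) =
        (binMatrix V k).mulVec ((G.lapMatrix ℝ).mulVec v) := by
      funext A
      have hR : (binMatrix V k).mulVec ((G.lapMatrix ℝ).mulVec v) A =
          ∑ a ∈ A.1, (G.lapMatrix ℝ).mulVec v a := bin_mulVec_apply k _ A
      rw [lap_mulVec_apply', hR, lap_sum_over G v A, ← token_neighbor_sum G hk1 v A]
      apply Finset.sum_congr rfl
      intro C _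
      rw [bin_mulVec_apply, bin_mulVec_apply]
    rw [key, heig, Matrix.mulVec_smul]
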